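/- Let G be an arbitrary group and let S = ⊕_{g∈G} S_g be a G-graded ring with principal component R = S_e. If S is left artinian, then R is left artinian. -/

import Mathlib

open Pointwise

set_option maxHeartbeats 1000000

/-- `A` is a `G`-grading of the ring `S`: `S` is the internal direct sum of the
additive subgroups `A g`, and `A g * A h ⊆ A (g * h)` for all `g h : G`. -/
def IsGrading {G S : Type*} [Group G] [Ring S] [DecidableEq G]
    (A : G → AddSubgroup S) : Prop :=
  DirectSum.IsInternal A ∧ ∀ g h : G, ∀ x ∈ A g, ∀ y ∈ A h, x * y ∈ A (g * h)

/-- The grading `A` is epsilon-strong: it is symmetric (`A g * A g⁻¹ * A g = A g`) and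
for every `g` there is `ε g ∈ A g * A g⁻¹` acting as a left identity on `A g`, with
`ε g⁻¹` acting as a right identity on `A g`.  Here `P * Q` denotes the additive subgroup
generated by products of elements of `P` and `Q`. -/
def IsEpsilonStrong {G S : Type*} [Group G] [Ring S] (A : G → AddSubgroup S) : Prop :=
  (∀ g : G, A g * A g⁻¹ * A g = A g) ∧
  ∃ ε : G → S, ∀ g : G, ε g ∈ A g * A g⁻¹ ∧ ∀ x ∈ A g, ε g * x = x ∧ x * ε g⁻¹ = x

/-- If `S` is a `G`-graded ring with principal component `R = S_e` and `S` is left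
artinian, then `R` is left artinian. -/
theorem left_artinian_principal_of_left_artinian
    {G S : Type*} [Group G] [Ring S] [DecidableEq G]
    (A : G → AddSubgroup S) (hgrading : IsGrading A)
    (R : Subring S) (hR : (R : Set S) = (A 1 : Set S))
    (hS : IsArtinianRing S) :
    IsArtinianRing R := by
  classical
  obtain ⟨hint, hmul⟩ := hgrading
  let e : (DirectSum G fun g => A g) ≃+ S := AddEquiv.ofBijective (DirectSum.coeAddMonoidHom A) hint
  let π : S →+ S :=
    { toFun := fun s => ((e.symm s 1 : A 1) : S)
      map_zero' := by simp
      map_add' := by intro a b; show ((e.symm (a+b) 1 : A 1) : S) = _; rw [map_add]; simp }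
  have hof : ∀ g (x : S) (hx : x ∈ A g), e.symm x = DirectSum.of (fun g => A g) g ⟨x, hx⟩ := by
    intro g x hx
    apply e.injective
    simp [e, AddEquiv.ofBijective]
    exact (DirectSum.coeAddMonoidHom_of A g ⟨x, hx⟩).symm
  have h1 : ∀ (x : S), x ∈ A 1 → π x = x := by
    intro x hx
    show ((e.symm x 1 : A 1) : S) = x
    rw [hof 1 x hx, DirectSum.of_eq_same]
  have h2 : ∀ g (x : S), x ∈ A g → g ≠ 1 → π x = 0 := by
    intro g x hx hg
    show ((e.symm x 1 : A 1) : S) = 0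
    rw [hof g x hx, DirectSum.of_eq_of_ne _ _ _ (Ne.symm hg)]
    rfl
  -- members of R are in A 1
  have hRA : ∀ x : R, (x : S) ∈ A 1 := by
    intro x
    rw [← SetLike.mem_coe, ← hR]
    exact x.2
  -- the image subgroup of an ideal
  let img : Submodule R R → AddSubgroup S := fun I =>
    AddSubgroup.map R.subtype.toAddMonoidHom I.toAddSubgroup
  have himg_sub : ∀ I : Submodule R R, ∀ x ∈ img I, x ∈ A 1 := by
    rintro I x ⟨y, hy, rfl⟩
    exact hRA y
  -- key: for r in img I and any s, π (s * r) ∈ img I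
  have key : ∀ I : Submodule R R, ∀ s : S, ∀ r ∈ img I, π (s * r) ∈ img I := by
    rintro I s r hr
    obtain ⟨r₀, hr₀, rfl⟩ := hr
    show π (s * (r₀ : S)) ∈ img I
    set d := e.symm s with hd
    have hs : s = ∑ g ∈ DFinsupp.support d, ((d g : S)) := by
      have : e d = s := e.apply_symm_apply s
      rw [← this]
      conv_lhs => rw [← DirectSum.sum_support_of d]
      rw [map_sum]
      simp [e, AddEquiv.ofBijective]
      exact Finset.sum_congr rfl fun g _ => DirectSum.coeAddMonoidHom_of A g (d g)
    rw [hs, Finset.sum_mul, map_sum]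
    apply AddSubgroup.sum_mem
    intro g _
    have hdg : ((d g : S)) ∈ A g := (d g).2
    have hmem : ((d g : S)) * (r₀ : S) ∈ A g := by
      have := hmul g 1 _ hdg _ (hRA r₀)
      rwa [mul_one] at this
    by_cases hg : g = 1
    · subst hg
      rw [h1 _ hmem]
      have hdR : ((d 1 : S)) ∈ R := by rw [← SetLike.mem_coe, hR]; exact hdg
      refine ⟨⟨(d 1 : S), hdR⟩ * r₀, I.smul_mem ⟨(d 1 : S), hdR⟩ hr₀, rfl⟩
    · rw [h2 g _ hmem hg]
      exact zero_mem _
  -- the strictly monotone map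
  let f : Submodule R R → Submodule S S := fun I =>
    Submodule.span S (Subtype.val '' (I : Set R))
  have hπf : ∀ I : Submodule R R, ∀ x ∈ f I, π x ∈ img I := by
    intro I x hx
    have : ∀ s : S, π (s * x) ∈ img I := by
      induction hx using Submodule.span_induction with
      | mem y hy =>
        intro s
        apply key
        obtain ⟨y₀, hy₀, rfl⟩ := hy
        exact ⟨y₀, hy₀, rfl⟩
      | zero => intro s; rw [mul_zero, map_zero]; exact zero_mem _
      | add y z hy hz ihy ihz =>
        intro s
        rw [mul_add, map_add]
        exact add_mem (ihy s) (ihz s)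
      | smul t y hy ihy =>
        intro s
        rw [smul_eq_mul, ← mul_assoc]
        exact ihy (s * t)
    have := this 1
    rwa [one_mul] at this
  have hmono : StrictMono f := by
    intro I J hIJ
    refine lt_of_le_of_ne (Submodule.span_mono (Set.image_mono hIJ.le.subset)) ?_
    intro heq
    obtain ⟨x, hxJ, hxI⟩ := SetLike.exists_of_lt hIJ
    have hxf : (x : S) ∈ f J := Submodule.subset_span ⟨x, hxJ, rfl⟩
    rw [← heq] at hxf
    have := hπf I _ hxf
    rw [h1 _ (hRA x)] at this
    obtain ⟨y, hy, hyx⟩ := this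
    have : y = x := Subtype.ext hyx
    exact hxI (this ▸ hy)
  exact hmono.wellFoundedLT
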